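/- For every Schwartz function φ on ℝ^d, the Fourier transform of Aφ satisfies (Aφ)^(k) = (2π)^{d/2} (â(k) - â(0)) φ̂(k) for all k ∈ ℝ^d. -/

import Mathlib

open MeasureTheory

/-- Fourier transform f̂(k) = (2π)^{-d/2} ∫ e^{-i⟨x,k⟩} f(x) dx. -/
noncomputable def ft {d : ℕ} (f : EuclideanSpace ℝ (Fin d) → ℂ)
    (k : EuclideanSpace ℝ (Fin d)) : ℂ :=
  (((2 * Real.pi) ^ (-(d : ℝ) / 2) : ℝ) : ℂ) *
    ∫ x, Complex.exp (-Complex.I * ((inner ℝ x k : ℝ) : ℂ)) * f x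

lemma conv_integral {d : ℕ} (F G : EuclideanSpace ℝ (Fin d) → ℂ)
    (hF : Integrable F) (hG : Integrable G) :
    ∫ x, ∫ y, F (x - y) * G y = (∫ x, F x) * (∫ y, G y) := by
  have key : Integrable (fun p : (EuclideanSpace ℝ (Fin d)) × (EuclideanSpace ℝ (Fin d)) =>
      G p.2 * F (p.1 - p.2)) (volume.prod volume) :=
    hG.convolution_integrand (ContinuousLinearMap.mul ℂ ℂ) hF
  calc ∫ x, ∫ y, F (x - y) * G y
      = ∫ x, ∫ y, G y * F (x - y) := by simp_rw [mul_comm]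
    _ = ∫ y, ∫ x, G y * F (x - y) := integral_integral_swap key
    _ = ∫ y, G y * ∫ x, F (x - y) := by simp_rw [integral_const_mul]
    _ = ∫ y, G y * ∫ x, F x := by simp_rw [integral_sub_right_eq_self F]
    _ = (∫ x, F x) * ∫ y, G y := by rw [integral_mul_const, mul_comm]

/-- For every Schwartz function φ, the Fourier transform of Aφ satisfies
(Aφ)^(k) = (2π)^{d/2} (â(k) - â(0)) φ̂(k). -/
theorem fourier_transform_of_one_particle_operator
    (d : ℕ) (a : EuclideanSpace ℝ (Fin d) → ℝ)
    (ha_nonneg : ∀ x, 0 ≤ a x) (ha_int : Integrable a)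
    (φ : SchwartzMap (EuclideanSpace ℝ (Fin d)) ℂ) (k : EuclideanSpace ℝ (Fin d)) :
    ft (fun x => ∫ y, (a (x - y) : ℂ) * (φ y - φ x)) k =
      (((2 * Real.pi) ^ ((d : ℝ) / 2) : ℝ) : ℂ) *
        (ft (fun x => (a x : ℂ)) k - ft (fun x => (a x : ℂ)) 0) * ft (⇑φ) k := by
  set E : EuclideanSpace ℝ (Fin d) → ℂ :=
    fun x => Complex.exp (-Complex.I * ((inner ℝ x k : ℝ) : ℂ)) with hE
  have hEnorm : ∀ x, ‖E x‖ = 1 := by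
    intro x
    simp [hE, Complex.norm_exp]
  have hEcont : Continuous E := by
    apply Complex.continuous_exp.comp
    exact continuous_const.mul
      (Complex.continuous_ofReal.comp (continuous_id.inner continuous_const))
  have hEbd : ∃ C, ∀ x, ‖E x‖ ≤ C := ⟨1, fun x => (hEnorm x).le⟩
  have haC : Integrable (fun x : EuclideanSpace ℝ (Fin d) => ((a x : ℝ) : ℂ)) := ha_int.ofReal
  have hφi : Integrable (⇑φ) := φ.integrable
  obtain ⟨C, hC⟩ : ∃ C, ∀ x, ‖φ x‖ ≤ C := by
    refine ⟨SchwartzMap.seminorm ℝ 0 0 φ, fun x => ?_⟩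
    simpa using φ.norm_le_seminorm ℝ x
  set Ia : ℂ := ∫ x, ((a x : ℝ) : ℂ) with hIa
  -- integrability of the convolution-type integrands
  have hconv_int : ∀ x, Integrable (fun y => ((a (x - y) : ℝ) : ℂ) * φ y) := by
    intro x
    have h1 : Integrable (fun y => ((a (x - y) : ℝ) : ℂ)) := haC.comp_sub_left x
    have h2 : Integrable (fun y => φ y * ((a (x - y) : ℝ) : ℂ)) :=
      h1.bdd_mul φ.continuous.aestronglyMeasurable (Filter.Eventually.of_forall hC)
    simpa [mul_comm] using h2
  -- split the inner integral
  have hinner : ∀ x, (∫ y, ((a (x - y) : ℝ) : ℂ) * (φ y - φ x)) =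
      (∫ y, ((a (x - y) : ℝ) : ℂ) * φ y) - Ia * φ x := by
    intro x
    have hax : Integrable (fun y => ((a (x - y) : ℝ) : ℂ)) := haC.comp_sub_left x
    have h2 : Integrable (fun y => ((a (x - y) : ℝ) : ℂ) * φ x) := hax.mul_const _
    simp_rw [mul_sub]
    rw [integral_sub (hconv_int x) h2, integral_mul_const,
      integral_sub_left_eq_self (fun y => ((a y : ℝ) : ℂ)) volume x, ← hIa, mul_comm Ia]
  have hconv_integrable : Integrable (fun x => ∫ y, ((a (x - y) : ℝ) : ℂ) * φ y) := by
    have key : Integrable (fun p : (EuclideanSpace ℝ (Fin d)) × (EuclideanSpace ℝ (Fin d)) =>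
        φ p.2 * ((a (p.1 - p.2) : ℝ) : ℂ)) (volume.prod volume) :=
      hφi.convolution_integrand (ContinuousLinearMap.mul ℂ ℂ) haC
    have h := key.integral_prod_left
    simpa [mul_comm] using h
  -- splitting of the phase
  have hsplit : ∀ x y : EuclideanSpace ℝ (Fin d), E x = E (x - y) * E y := by
    intro x y
    simp only [hE]
    rw [← Complex.exp_add]
    congr 1
    have h : (inner ℝ (x - y) k : ℝ) + (inner ℝ y k : ℝ) = (inner ℝ x k : ℝ) := by
      rw [inner_sub_left]; ring
    push_cast [← h]
    ring
  -- key convolution identity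
  have hFi : Integrable (fun z => E z * ((a z : ℝ) : ℂ)) :=
    haC.bdd_mul hEcont.aestronglyMeasurable (Filter.Eventually.of_forall fun x => (hEnorm x).le)
  have hGi : Integrable (fun y => E y * φ y) :=
    hφi.bdd_mul hEcont.aestronglyMeasurable (Filter.Eventually.of_forall fun x => (hEnorm x).le)
  have hmain : (∫ x, E x * ∫ y, ((a (x - y) : ℝ) : ℂ) * φ y) =
      (∫ z, E z * ((a z : ℝ) : ℂ)) * ∫ y, E y * φ y := by
    have h1 : ∀ x, E x * (∫ y, ((a (x - y) : ℝ) : ℂ) * φ y) =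
        ∫ y, (E (x - y) * ((a (x - y) : ℝ) : ℂ)) * (E y * φ y) := by
      intro x
      rw [← integral_const_mul]
      refine integral_congr_ae (Filter.Eventually.of_forall fun y => ?_)
      rw [hsplit x y]; ring
    simp_rw [h1]
    exact conv_integral _ _ hFi hGi
  -- compute ft a at 0
  have hfta0 : ft (fun x => ((a x : ℝ) : ℂ)) 0 =
      (((2 * Real.pi) ^ (-(d : ℝ) / 2) : ℝ) : ℂ) * Ia := by
    unfold ft
    congr 1
    refine integral_congr_ae (Filter.Eventually.of_forall fun x => ?_)
    simp
  -- now put everything together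
  unfold ft
  have hstep : (∫ x, E x * ∫ y, ((a (x - y) : ℝ) : ℂ) * (φ y - φ x)) =
      (∫ z, E z * ((a z : ℝ) : ℂ)) * (∫ y, E y * φ y) - Ia * ∫ x, E x * φ x := by
    have h2 : (fun x => E x * ∫ y, ((a (x - y) : ℝ) : ℂ) * (φ y - φ x)) =
        fun x => E x * (∫ y, ((a (x - y) : ℝ) : ℂ) * φ y) - Ia * (E x * φ x) := by
      funext x
      rw [hinner x]; ring
    rw [h2, integral_sub (hconv_integrable.bdd_mul hEcont.aestronglyMeasurable (Filter.Eventually.of_forall fun x => (hEnorm x).le))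
      ((hGi.const_mul Ia)), integral_const_mul, hmain]
  rw [show (fun x => Complex.exp (-Complex.I * ((inner ℝ x k : ℝ) : ℂ)) *
      ∫ y, ((a (x - y) : ℝ) : ℂ) * (φ y - φ x)) =
      (fun x => E x * ∫ y, ((a (x - y) : ℝ) : ℂ) * (φ y - φ x)) from rfl, hstep]
  have hfta0' : (((2 * Real.pi) ^ (-(d : ℝ) / 2) : ℝ) : ℂ) *
      ∫ x, Complex.exp (-Complex.I * ((inner ℝ x (0 : EuclideanSpace ℝ (Fin d)) : ℝ) : ℂ)) *
        ((a x : ℝ) : ℂ) = (((2 * Real.pi) ^ (-(d : ℝ) / 2) : ℝ) : ℂ) * Ia := by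
    have := hfta0
    unfold ft at this
    exact this
  rw [hfta0']
  set P : ℂ := (((2 * Real.pi) ^ ((d : ℝ) / 2) : ℝ) : ℂ) with hP
  set Q : ℂ := (((2 * Real.pi) ^ (-(d : ℝ) / 2) : ℝ) : ℂ) with hQ
  have hPQ : P * Q = 1 := by
    rw [hP, hQ, ← Complex.ofReal_mul, ← Real.rpow_add (by positivity),
      show (d : ℝ) / 2 + -(d : ℝ) / 2 = 0 by ring, Real.rpow_zero, Complex.ofReal_one]
  set IF : ℂ := ∫ z, E z * ((a z : ℝ) : ℂ)
  set IG : ℂ := ∫ y, E y * φ y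
  linear_combination (-Q * (IF - Ia) * IG) * hPQ
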